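/- Let (H_1,E_1) and (H_2,E_2) be simplicial semigroups of ranks r_1 and r_2, each satisfying the CM condition. Let H = H_1 × H_2 ⊆ ℤ^{r_1+r_2} and E = (E_1 × {0}) ∪ ({0} × E_2). Then (H,E) has an AG witness if and only if either (1) type H_1 = type H_2 = 1, or (2) (H_1,E_1) has an AG witness and H_2 = ℕE_2 (i.e., H_2 is the free monoid generated by its extreme rays), or symmetrically (H_2,E_2) has an AG witness and H_1 = ℕE_1. (By the paper's main theorem, having an AG witness is equivalent to being an AG semigroup.) -/

import Mathlib

open scoped Classical

namespace AGpaper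

/-- `(H, E)` is a simplicial semigroup of rank `d` with extreme rays `b : Fin d → ℤ^N`. -/
def IsSimplicial (N d : ℕ) (H : AddSubmonoid (Fin N → ℤ)) (b : Fin d → (Fin N → ℤ)) : Prop :=
  H.FG ∧ (∀ i, b i ∈ H) ∧
  LinearIndependent ℚ (fun i : Fin d => (fun j : Fin N => ((b i j : ℚ)))) ∧
  (∃ n : ℕ, 0 < n ∧ ∀ x ∈ H, ∃ c : Fin d → ℕ, (n : ℤ) • x = ∑ i, (c i : ℤ) • b i)

/-- The Apéry set w.r.t. a general family of extreme rays. -/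
def aperyG {N d : ℕ} (H : AddSubmonoid (Fin N → ℤ)) (b : Fin d → (Fin N → ℤ)) :
    Set (Fin N → ℤ) :=
  {x | x ∈ H ∧ ∀ i : Fin d, x - b i ∉ H}

/-- The socle w.r.t. a general family of extreme rays. -/
def socG {N d : ℕ} (H : AddSubmonoid (Fin N → ℤ)) (b : Fin d → (Fin N → ℤ)) :
    Set (Fin N → ℤ) :=
  {x | x ∈ aperyG H b ∧ ∀ y ∈ aperyG H b, y - x ∈ H → x = y}

/-- Concatenation `ℤ^{r₁} × ℤ^{r₂} →+ ℤ^{r₁+r₂}` as an additive monoid homomorphism. -/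
def appendHom (r₁ r₂ : ℕ) : ((Fin r₁ → ℤ) × (Fin r₂ → ℤ)) →+ (Fin (r₁ + r₂) → ℤ) where
  toFun p := Fin.append p.1 p.2
  map_zero' := by
    funext i
    refine Fin.addCases (fun j => ?_) (fun j => ?_) i <;>
      simp [Fin.append_left, Fin.append_right]
  map_add' p q := by
    funext i
    refine Fin.addCases (fun j => ?_) (fun j => ?_) i <;>
      simp [Fin.append_left, Fin.append_right]

/-- The product semigroup `H = H₁ × H₂ ⊆ ℤ^{r₁+r₂}`. -/
def prodSg {r₁ r₂ : ℕ} (H₁ : AddSubmonoid (Fin r₁ → ℤ)) (H₂ : AddSubmonoid (Fin r₂ → ℤ)) :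
    AddSubmonoid (Fin (r₁ + r₂) → ℤ) :=
  AddSubmonoid.map (appendHom r₁ r₂) (H₁.prod H₂)

/-- The extreme rays `E = (E₁ × {0}) ∪ ({0} × E₂)` of the product. -/
def prodRays {r₁ r₂ : ℕ} (b₁ : Fin r₁ → (Fin r₁ → ℤ)) (b₂ : Fin r₂ → (Fin r₂ → ℤ)) :
    Fin (r₁ + r₂) → (Fin (r₁ + r₂) → ℤ) :=
  Fin.addCases (fun i => Fin.append (b₁ i) 0) (fun j => Fin.append 0 (b₂ j))

/-- The CM condition w.r.t. a general family of extreme rays. -/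
def CMG {N d : ℕ} (H : AddSubmonoid (Fin N → ℤ)) (b : Fin d → (Fin N → ℤ)) : Prop :=
  ∀ g ∈ AddSubgroup.closure (H : Set (Fin N → ℤ)),
    ∃! a, a ∈ aperyG H b ∧ ∃ c : Fin d → ℤ, g - a = ∑ i, c i • b i

/-- An AG witness w.r.t. a general family of extreme rays. -/
def AGwitnessG {N d : ℕ} (H : AddSubmonoid (Fin N → ℤ)) (b : Fin d → (Fin N → ℤ))
    (w : Fin N → ℤ) : Prop :=
  w ∈ socG H b ∧
  (∀ h ∈ aperyG H b, ((h ∈ socG H b ∧ h ≠ w) ↔ w - h ∉ H)) ∧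
  (∀ h ∈ socG H b, h ≠ w → ∃ i : Fin d, ∃ h' ∈ socG H b, h + h' = w + b i)

section Generic

variable {N d : ℕ} {H : AddSubmonoid (Fin N → ℤ)} {b : Fin d → (Fin N → ℤ)}

lemma coeff_eq (hli : LinearIndependent ℚ (fun i : Fin d => (fun j : Fin N => ((b i j : ℚ)))))
    (c e : Fin d → ℤ) (h : ∑ i, c i • b i = ∑ i, e i • b i) : c = e := by
  have h2 : ∑ i, ((c i - e i : ℤ) : ℚ) • (fun j : Fin N => ((b i j : ℚ))) = 0 := by
    funext j
    have hz := congrFun h j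
    simp only [Finset.sum_apply, Pi.smul_apply, smul_eq_mul] at hz
    have hq : ((∑ i, c i * b i j : ℤ) : ℚ) = ((∑ i, e i * b i j : ℤ) : ℚ) := by
      exact_mod_cast congrArg (fun t : ℤ => (t : ℚ)) hz
    push_cast at hq
    simp only [Finset.sum_apply, Pi.smul_apply, smul_eq_mul, Pi.zero_apply]
    push_cast
    simp only [sub_mul]
    rw [Finset.sum_sub_distrib]
    linarith
  have h3 := Fintype.linearIndependent_iff.mp hli (fun i => ((c i - e i : ℤ) : ℚ)) h2
  funext i
  have := h3 i
  have : ((c i - e i : ℤ) : ℚ) = 0 := this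
  have : (c i - e i : ℤ) = 0 := by exact_mod_cast this
  omega

lemma eq_zero_of_mem_neg_mem (hs : IsSimplicial N d H b) {x : Fin N → ℤ}
    (hx : x ∈ H) (hx' : -x ∈ H) : x = 0 := by
  obtain ⟨-, -, hli, n, hn, hrep⟩ := hs
  obtain ⟨c, hc⟩ := hrep x hx
  obtain ⟨c', hc'⟩ := hrep (-x) hx'
  have hsum : ∑ i, ((c i : ℤ) + (c' i : ℤ)) • b i = ∑ i, (0 : ℤ) • b i := by
    simp only [add_smul, Finset.sum_add_distrib, ← hc, ← hc']
    simp
  have := coeff_eq hli _ _ hsum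
  have hcz : ∀ i, (c i : ℤ) = 0 := by
    intro i
    have := congrFun this i
    omega
  have hx0 : (n : ℤ) • x = 0 := by
    rw [hc]
    apply Finset.sum_eq_zero
    intro i _
    rw [hcz i, zero_smul]
  funext j
  have := congrFun hx0 j
  simp only [Pi.smul_apply, smul_eq_mul, Pi.zero_apply] at this ⊢
  have hnz : (n : ℤ) ≠ 0 := by exact_mod_cast hn.ne'
  exact (mul_eq_zero.mp this).resolve_left hnz

lemma ray_ne_zero (hs : IsSimplicial N d H b) (i : Fin d) : b i ≠ 0 := by
  intro h
  have := hs.2.2.1.ne_zero i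
  apply this
  funext j
  simp [h]

lemma zero_mem_apery (hs : IsSimplicial N d H b) : (0 : Fin N → ℤ) ∈ aperyG H b := by
  refine ⟨H.zero_mem, fun i hmem => ?_⟩
  rw [zero_sub] at hmem
  exact ray_ne_zero hs i (neg_eq_zero.mp (eq_zero_of_mem_neg_mem hs hmem (by simpa using hs.2.1 i)))

lemma mem_closure_range_iff {x : Fin N → ℤ} :
    x ∈ AddSubmonoid.closure (Set.range b) ↔ ∃ c : Fin d → ℕ, x = ∑ i, (c i : ℤ) • b i := by
  constructor
  · intro hx
    induction hx using AddSubmonoid.closure_induction with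
    | mem y hy =>
      obtain ⟨i, rfl⟩ := hy
      exact ⟨fun k => if k = i then 1 else 0, by simp [ite_smul, Finset.sum_ite_eq']⟩
    | zero => exact ⟨0, by simp⟩
    | add y z _ _ hy hz =>
      obtain ⟨c, rfl⟩ := hy
      obtain ⟨e, rfl⟩ := hz
      exact ⟨c + e, by simp [add_smul, Finset.sum_add_distrib]⟩
  · rintro ⟨c, rfl⟩
    refine AddSubmonoid.sum_mem _ (fun i _ => ?_)
    rw [natCast_zsmul]
    exact AddSubmonoid.nsmul_mem _ (AddSubmonoid.subset_closure (Set.mem_range_self i)) _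

lemma apery_of_free (hs : IsSimplicial N d H b)
    (hfree : H = AddSubmonoid.closure (Set.range b)) : aperyG H b = {0} := by
  ext a
  simp only [Set.mem_singleton_iff]
  constructor
  · rintro ⟨haH, hap⟩
    obtain ⟨c, hc⟩ := mem_closure_range_iff.mp (hfree ▸ haH)
    by_cases hc0 : c = 0
    · simpa [hc0] using hc
    · obtain ⟨i, hi⟩ : ∃ i, c i ≠ 0 := by
        by_contra hno
        push_neg at hno
        exact hc0 (funext hno)
      exfalso
      apply hap i
      set e : Fin d → ℕ := fun j => if j = i then c i - 1 else c j with he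
      have key : a - b i = ∑ j, (e j : ℤ) • b j := by
        rw [hc, sub_eq_iff_eq_add']
        have : ∀ j ∈ Finset.univ, (c j : ℤ) • b j
            = (if j = i then (1:ℤ) else 0) • b j + (e j : ℤ) • b j := by
          intro j _
          rw [← add_smul]
          congr 1
          by_cases hji : j = i
          · subst hji
            simp only [he, if_pos rfl]
            have : 1 ≤ c j := Nat.one_le_iff_ne_zero.mpr hi
            push_cast [Nat.cast_sub this]
            ring
          · simp [he, hji]
        rw [Finset.sum_congr rfl this, Finset.sum_add_distrib]
        congr 1
        simp [ite_smul, Finset.sum_ite_eq']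
      rw [key, hfree]
      exact mem_closure_range_iff.mpr ⟨e, rfl⟩
  · rintro rfl
    exact zero_mem_apery hs

lemma free_of_apery_zero (hs : IsSimplicial N d H b) (hCM : CMG H b)
    (hap : aperyG H b = {0}) : H = AddSubmonoid.closure (Set.range b) := by
  refine le_antisymm ?_ ((AddSubmonoid.closure_le).mpr ?_)
  · intro h hh
    obtain ⟨a, ⟨haA, c, hc⟩, -⟩ := hCM h (AddSubgroup.subset_closure hh)
    rw [hap, Set.mem_singleton_iff] at haA
    subst haA
    rw [sub_zero] at hc
    obtain ⟨-, -, hli, n, hn, hrep⟩ := hs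
    obtain ⟨e, he⟩ := hrep h hh
    have hsum : ∑ i, ((n : ℤ) * c i) • b i = ∑ i, (e i : ℤ) • b i := by
      rw [← he, hc]
      rw [Finset.smul_sum]
      exact Finset.sum_congr rfl (fun i _ => (smul_smul _ _ _).symm)
    have hce := coeff_eq hli _ _ hsum
    have hcnn : ∀ i, 0 ≤ c i := by
      intro i
      have := congrFun hce i
      nlinarith [Int.natCast_nonneg (e i), (by exact_mod_cast hn : (0:ℤ) < (n:ℤ))]
    refine mem_closure_range_iff.mpr ⟨fun i => (c i).toNat, ?_⟩
    rw [hc]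
    exact Finset.sum_congr rfl (fun i _ => by rw [Int.toNat_of_nonneg (hcnn i)])
  · rintro x ⟨i, rfl⟩
    exact hs.2.1 i

lemma soc_of_apery_zero (hap : aperyG H b = {0}) : socG H b = {0} := by
  ext x
  simp only [Set.mem_singleton_iff, socG, Set.mem_setOf_eq, hap]
  constructor
  · rintro ⟨h, -⟩; exact h
  · rintro rfl
    exact ⟨rfl, fun y hy _ => hy.symm⟩

lemma apery_finite (hs : IsSimplicial N d H b) (hCM : CMG H b) : (aperyG H b).Finite := by
  obtain ⟨-, -, hli, n, hn, hrep⟩ := hs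
  haveI : NeZero n := ⟨hn.ne'⟩
  rw [← Set.finite_coe_iff]
  choose c hc using fun a : aperyG H b => hrep a a.2.1
  have hinj : Function.Injective
      (fun a : aperyG H b => (fun i => ((c a i : ZMod n)) : Fin d → ZMod n)) := by
    intro a a' hEq
    have hmod : ∀ i, ∃ m : ℤ, (c a' i : ℤ) - (c a i : ℤ) = n * m := by
      intro i
      have h1 : ((c a i : ℕ) : ZMod n) = ((c a' i : ℕ) : ZMod n) := congrFun hEq i
      have h2 := (ZMod.natCast_eq_natCast_iff _ _ _).mp h1
      obtain ⟨m, hm⟩ := (Nat.modEq_iff_dvd.mp h2)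
      exact ⟨m, hm⟩
    choose m hm using hmod
    have hsm : (n : ℤ) • ((a' : Fin N → ℤ) - a) = (n : ℤ) • (∑ i, m i • b i) := by
      rw [smul_sub, hc, hc]
      rw [Finset.smul_sum]
      rw [← Finset.sum_sub_distrib]
      refine Finset.sum_congr rfl (fun i _ => ?_)
      rw [← sub_smul, hm i, smul_smul]
    have hnz : (n : ℤ) ≠ 0 := by exact_mod_cast hn.ne'
    have hdiff : (a' : Fin N → ℤ) - a = ∑ i, m i • b i :=
      smul_right_injective (Fin N → ℤ) hnz hsm
    have hu := hCM (a' : Fin N → ℤ) (AddSubgroup.subset_closure a'.2.1)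
    have e1 : (a' : Fin N → ℤ) ∈ aperyG H b ∧ ∃ cc : Fin d → ℤ,
        (a' : Fin N → ℤ) - a' = ∑ i, cc i • b i := ⟨a'.2, 0, by simp⟩
    have e2 : (a : Fin N → ℤ) ∈ aperyG H b ∧ ∃ cc : Fin d → ℤ,
        (a' : Fin N → ℤ) - a = ∑ i, cc i • b i := ⟨a.2, m, hdiff⟩
    have := (hu.unique e1 e2).symm
    exact Subtype.ext this
  exact Finite.of_injective _ hinj

lemma exists_soc_above (hs : IsSimplicial N d H b) (hCM : CMG H b) :
    ∀ a ∈ aperyG H b, ∃ s ∈ socG H b, s - a ∈ H := by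
  have hfin := apery_finite hs hCM
  have key : ∀ k : ℕ, ∀ a ∈ aperyG H b,
      ({z ∈ aperyG H b | z - a ∈ H}).ncard ≤ k → ∃ s ∈ socG H b, s - a ∈ H := by
    intro k
    induction k with
    | zero =>
      intro a ha h0
      exfalso
      have hmem : a ∈ {z ∈ aperyG H b | z - a ∈ H} := ⟨ha, by simpa using H.zero_mem⟩
      have : ({z ∈ aperyG H b | z - a ∈ H}).ncard = 0 := Nat.le_zero.mp h0
      rw [Set.ncard_eq_zero (hfin.subset (fun z hz => hz.1))] at this
      rw [this] at hmem
      exact hmem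
    | succ k ih =>
      intro a ha hle
      by_cases hsoc : a ∈ socG H b
      · exact ⟨a, hsoc, by simpa using H.zero_mem⟩
      · have : ∃ y ∈ aperyG H b, y - a ∈ H ∧ a ≠ y := by
          by_contra hno
          push_neg at hno
          exact hsoc ⟨ha, fun y hy hya => hno y hy hya⟩
        obtain ⟨y, hy, hya, hay⟩ := this
        have hsub : {z ∈ aperyG H b | z - y ∈ H} ⊆ {z ∈ aperyG H b | z - a ∈ H} := by
          rintro z ⟨hz, hzy⟩
          exact ⟨hz, by simpa [sub_add_sub_cancel] using H.add_mem hzy hya⟩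
        have hnm : a ∉ {z ∈ aperyG H b | z - y ∈ H} := by
          rintro ⟨-, hay'⟩
          exact hay (sub_eq_zero.mp (eq_zero_of_mem_neg_mem hs hya (by simpa using hay'))).symm
        have hlt : ({z ∈ aperyG H b | z - y ∈ H}).ncard
            < ({z ∈ aperyG H b | z - a ∈ H}).ncard := by
          apply Set.ncard_lt_ncard
          · exact ⟨hsub, fun hcon => hnm (hcon ⟨ha, by simpa using H.zero_mem⟩)⟩
          · exact hfin.subset (fun z hz => hz.1)
        obtain ⟨s, hsS, hsy⟩ := ih y hy (by omega)
        exact ⟨s, hsS, by simpa [sub_add_sub_cancel] using H.add_mem hsy hya⟩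
  intro a ha
  exact key _ a ha le_rfl

lemma soc_singleton_sub (hs : IsSimplicial N d H b) (hCM : CMG H b) {w : Fin N → ℤ}
    (hw : socG H b = {w}) : ∀ a ∈ aperyG H b, w - a ∈ H := by
  intro a ha
  obtain ⟨s, hsS, hsa⟩ := exists_soc_above hs hCM a ha
  rw [hw, Set.mem_singleton_iff] at hsS
  exact hsS ▸ hsa

end Generic

section Prod

variable {r₁ r₂ : ℕ}

def Lp (x : Fin (r₁ + r₂) → ℤ) : Fin r₁ → ℤ := fun i => x (Fin.castAdd r₂ i)
def Rp (x : Fin (r₁ + r₂) → ℤ) : Fin r₂ → ℤ := fun j => x (Fin.natAdd r₁ j)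

@[simp] lemma Lp_append (p : Fin r₁ → ℤ) (q : Fin r₂ → ℤ) : Lp (Fin.append p q) = p := by
  funext i; simp [Lp, Fin.append_left]
@[simp] lemma Rp_append (p : Fin r₁ → ℤ) (q : Fin r₂ → ℤ) : Rp (Fin.append p q) = q := by
  funext j; simp [Rp, Fin.append_right]
lemma append_Lp_Rp (x : Fin (r₁ + r₂) → ℤ) : Fin.append (Lp x) (Rp x) = x := by
  funext i
  refine Fin.addCases (fun j => ?_) (fun j => ?_) i <;>
    simp [Lp, Rp, Fin.append_left, Fin.append_right]
@[simp] lemma Lp_sub (x y : Fin (r₁ + r₂) → ℤ) : Lp (x - y) = Lp x - Lp y := rfl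
@[simp] lemma Rp_sub (x y : Fin (r₁ + r₂) → ℤ) : Rp (x - y) = Rp x - Rp y := rfl
@[simp] lemma Lp_add (x y : Fin (r₁ + r₂) → ℤ) : Lp (x + y) = Lp x + Lp y := rfl
@[simp] lemma Rp_add (x y : Fin (r₁ + r₂) → ℤ) : Rp (x + y) = Rp x + Rp y := rfl

lemma LR_ext {x y : Fin (r₁ + r₂) → ℤ} (hL : Lp x = Lp y) (hR : Rp x = Rp y) : x = y := by
  rw [← append_Lp_Rp x, ← append_Lp_Rp y, hL, hR]

@[simp] lemma prodRays_castAdd (b₁ : Fin r₁ → (Fin r₁ → ℤ)) (b₂ : Fin r₂ → (Fin r₂ → ℤ))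
    (j : Fin r₁) : prodRays b₁ b₂ (Fin.castAdd r₂ j) = Fin.append (b₁ j) 0 := by
  simp [prodRays]
@[simp] lemma prodRays_natAdd (b₁ : Fin r₁ → (Fin r₁ → ℤ)) (b₂ : Fin r₂ → (Fin r₂ → ℤ))
    (j : Fin r₂) : prodRays b₁ b₂ (Fin.natAdd r₁ j) = Fin.append (0 : Fin r₁ → ℤ) (b₂ j) := by
  simp [prodRays]

lemma fin_add_cases (i : Fin (r₁ + r₂)) :
    (∃ j, i = Fin.castAdd r₂ j) ∨ ∃ j, i = Fin.natAdd r₁ j :=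
  Fin.addCases (fun j => Or.inl ⟨j, rfl⟩) (fun j => Or.inr ⟨j, rfl⟩) i

variable {H₁ : AddSubmonoid (Fin r₁ → ℤ)} {H₂ : AddSubmonoid (Fin r₂ → ℤ)}
variable {b₁ : Fin r₁ → (Fin r₁ → ℤ)} {b₂ : Fin r₂ → (Fin r₂ → ℤ)}

lemma mem_prodSg {x : Fin (r₁ + r₂) → ℤ} :
    x ∈ prodSg H₁ H₂ ↔ Lp x ∈ H₁ ∧ Rp x ∈ H₂ := by
  constructor
  · intro hx
    obtain ⟨pq, hpq, rfl⟩ := AddSubmonoid.mem_map.mp hx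
    rw [AddSubmonoid.mem_prod] at hpq
    simpa [appendHom] using hpq
  · rintro ⟨h1, h2⟩
    exact AddSubmonoid.mem_map.mpr ⟨(Lp x, Rp x), AddSubmonoid.mem_prod.mpr ⟨h1, h2⟩, append_Lp_Rp x⟩

lemma apery_prod {x : Fin (r₁ + r₂) → ℤ} :
    x ∈ aperyG (prodSg H₁ H₂) (prodRays b₁ b₂) ↔
      Lp x ∈ aperyG H₁ b₁ ∧ Rp x ∈ aperyG H₂ b₂ := by
  constructor
  · rintro ⟨hxH, hray⟩
    obtain ⟨hx1, hx2⟩ := mem_prodSg.mp hxH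
    refine ⟨⟨hx1, fun j hmem => ?_⟩, ⟨hx2, fun j hmem => ?_⟩⟩
    · exact hray (Fin.castAdd r₂ j) (mem_prodSg.mpr (by simpa using ⟨hmem, hx2⟩))
    · exact hray (Fin.natAdd r₁ j) (mem_prodSg.mpr (by simpa using ⟨hx1, hmem⟩))
  · rintro ⟨⟨hx1, hr1⟩, ⟨hx2, hr2⟩⟩
    refine ⟨mem_prodSg.mpr ⟨hx1, hx2⟩, fun i hmem => ?_⟩
    rcases fin_add_cases i with ⟨j, rfl⟩ | ⟨j, rfl⟩
    · rw [mem_prodSg] at hmem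
      simp only [Lp_sub, Rp_sub, prodRays_castAdd, Lp_append, Rp_append, sub_zero] at hmem
      exact hr1 j hmem.1
    · rw [mem_prodSg] at hmem
      simp only [Lp_sub, Rp_sub, prodRays_natAdd, Lp_append, Rp_append, sub_zero] at hmem
      exact hr2 j hmem.2

lemma soc_prod {x : Fin (r₁ + r₂) → ℤ} :
    x ∈ socG (prodSg H₁ H₂) (prodRays b₁ b₂) ↔
      Lp x ∈ socG H₁ b₁ ∧ Rp x ∈ socG H₂ b₂ := by
  constructor
  · rintro ⟨hxA, hmax⟩
    obtain ⟨hx1, hx2⟩ := apery_prod.mp hxA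
    refine ⟨⟨hx1, fun y hy hyx => ?_⟩, ⟨hx2, fun y hy hyx => ?_⟩⟩
    · have h1 : Fin.append y (Rp x) ∈ aperyG (prodSg H₁ H₂) (prodRays b₁ b₂) :=
        apery_prod.mpr (by simpa using ⟨hy, hx2⟩)
      have h2 : Fin.append y (Rp x) - x ∈ prodSg H₁ H₂ := by
        rw [mem_prodSg]
        exact ⟨by simpa using hyx, by simpa using H₂.zero_mem⟩
      have := hmax _ h1 h2
      have := congrArg Lp this
      simpa using this
    · have h1 : Fin.append (Lp x) y ∈ aperyG (prodSg H₁ H₂) (prodRays b₁ b₂) :=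
        apery_prod.mpr (by simpa using ⟨hx1, hy⟩)
      have h2 : Fin.append (Lp x) y - x ∈ prodSg H₁ H₂ := by
        rw [mem_prodSg]
        exact ⟨by simpa using H₁.zero_mem, by simpa using hyx⟩
      have := hmax _ h1 h2
      have := congrArg Rp this
      simpa using this
  · rintro ⟨⟨hx1, hm1⟩, ⟨hx2, hm2⟩⟩
    refine ⟨apery_prod.mpr ⟨⟨hx1.1, hx1.2⟩, ⟨hx2.1, hx2.2⟩⟩, fun y hy hyx => ?_⟩
    obtain ⟨hy1, hy2⟩ := apery_prod.mp hy
    rw [mem_prodSg] at hyx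
    simp only [Lp_sub, Rp_sub] at hyx
    exact LR_ext (hm1 _ hy1 hyx.1) (hm2 _ hy2 hyx.2)

end Prod

section Main

variable {r₁ r₂ : ℕ} {H₁ : AddSubmonoid (Fin r₁ → ℤ)} {H₂ : AddSubmonoid (Fin r₂ → ℤ)}
  {b₁ : Fin r₁ → (Fin r₁ → ℤ)} {b₂ : Fin r₂ → (Fin r₂ → ℤ)}

lemma forward_main (h₁ : IsSimplicial r₁ r₁ H₁ b₁) (h₂ : IsSimplicial r₂ r₂ H₂ b₂)
    (hCM₂ : CMG H₂ b₂) {w : Fin (r₁ + r₂) → ℤ}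
    (hw : AGwitnessG (prodSg H₁ H₂) (prodRays b₁ b₂) w)
    (hns : ∃ a ∈ socG H₁ b₁, a ≠ Lp w) :
    (∃ w', AGwitnessG H₁ b₁ w') ∧ H₂ = AddSubmonoid.closure (Set.range b₂) := by
  obtain ⟨hwsoc, hcond1, hcond2⟩ := hw
  obtain ⟨hw1, hw2⟩ := soc_prod.mp hwsoc
  obtain ⟨a₁, ha₁, hane⟩ := hns
  have hsocsub : socG H₂ b₂ ⊆ {Rp w} := by
    intro a₂ ha₂
    rw [Set.mem_singleton_iff]
    by_contra hne2
    have hsoc : Fin.append a₁ a₂ ∈ socG (prodSg H₁ H₂) (prodRays b₁ b₂) :=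
      soc_prod.mpr (by simpa using ⟨ha₁, ha₂⟩)
    have hne : Fin.append a₁ a₂ ≠ w := fun hEq => hane (by simpa using congrArg Lp hEq)
    obtain ⟨i, h', hh', heq⟩ := hcond2 _ hsoc hne
    obtain ⟨hh'1, hh'2⟩ := soc_prod.mp hh'
    rcases fin_add_cases i with ⟨j, rfl⟩ | ⟨j, rfl⟩
    · have hthis := congrArg Rp heq
      simp only [Rp_add, Rp_append, prodRays_castAdd, add_zero] at hthis
      have hmem : Rp w - a₂ ∈ H₂ := by
        rw [← hthis, add_sub_cancel_left]
        exact hh'2.1.1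
      exact hne2 (ha₂.2 _ hw2.1 hmem)
    · have hthis := congrArg Lp heq
      simp only [Lp_add, Lp_append, prodRays_natAdd, add_zero] at hthis
      have hmem : Lp w - a₁ ∈ H₁ := by
        rw [← hthis, add_sub_cancel_left]
        exact hh'1.1.1
      exact hane (ha₁.2 _ hw1.1 hmem)
  have hsoc2 : socG H₂ b₂ = {Rp w} :=
    Set.Subset.antisymm hsocsub (Set.singleton_subset_iff.mpr hw2)
  have hapsub : aperyG H₂ b₂ ⊆ {Rp w} := by
    intro a₂ ha₂
    rw [Set.mem_singleton_iff]
    by_contra hne2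
    have hnotsoc : a₂ ∉ socG H₂ b₂ := by
      intro hcon
      rw [hsoc2, Set.mem_singleton_iff] at hcon
      exact hne2 hcon
    have hAp : Fin.append a₁ a₂ ∈ aperyG (prodSg H₁ H₂) (prodRays b₁ b₂) :=
      apery_prod.mpr (by simpa using ⟨ha₁.1, ha₂⟩)
    have hmem : w - Fin.append a₁ a₂ ∈ prodSg H₁ H₂ := by
      by_contra hnm
      have hsp := (hcond1 _ hAp).mpr hnm
      have hs := (soc_prod.mp hsp.1).2
      rw [Rp_append] at hs
      exact hnotsoc hs
    rw [mem_prodSg] at hmem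
    simp only [Lp_sub, Lp_append] at hmem
    exact hane (ha₁.2 _ hw1.1 hmem.1)
  have hw2z : Rp w = 0 :=
    (Set.mem_singleton_iff.mp (hapsub (zero_mem_apery h₂))).symm
  rw [hw2z] at hapsub
  have hap2 : aperyG H₂ b₂ = {0} :=
    Set.Subset.antisymm hapsub (Set.singleton_subset_iff.mpr (zero_mem_apery h₂))
  have hfree : H₂ = AddSubmonoid.closure (Set.range b₂) := free_of_apery_zero h₂ hCM₂ hap2
  have h0soc : (0 : Fin r₂ → ℤ) ∈ socG H₂ b₂ := by
    rw [hsoc2, hw2z]; rfl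
  refine ⟨⟨Lp w, hw1, ?_, ?_⟩, hfree⟩
  · intro a ha
    have hAp : Fin.append a 0 ∈ aperyG (prodSg H₁ H₂) (prodRays b₁ b₂) :=
      apery_prod.mpr (by simpa using ⟨ha, zero_mem_apery h₂⟩)
    have hiff := hcond1 _ hAp
    constructor
    · rintro ⟨hsoc, hne⟩
      intro hmem
      have hm : w - Fin.append a 0 ∈ prodSg H₁ H₂ := by
        rw [mem_prodSg]
        constructor
        · simpa using hmem
        · simpa [hw2z] using H₂.zero_mem
      have hne' : Fin.append a 0 ≠ w := fun hEq => hne (by simpa using congrArg Lp hEq)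
      exact hiff.mp ⟨soc_prod.mpr (by simpa using ⟨hsoc, h0soc⟩), hne'⟩ hm
    · intro hmem
      have hnm : w - Fin.append a 0 ∉ prodSg H₁ H₂ := by
        rw [mem_prodSg]
        rintro ⟨hL, -⟩
        simp only [Lp_sub, Lp_append] at hL
        exact hmem hL
      obtain ⟨hsocp, hnep⟩ := hiff.mpr hnm
      have hls := (soc_prod.mp hsocp).1
      rw [Lp_append] at hls
      refine ⟨hls, fun hEq => hnep ?_⟩
      apply LR_ext <;> simp [hEq, hw2z]
  · intro h hsoc hne
    have hsocp : Fin.append h 0 ∈ socG (prodSg H₁ H₂) (prodRays b₁ b₂) :=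
      soc_prod.mpr (by simpa using ⟨hsoc, h0soc⟩)
    have hnep : Fin.append h 0 ≠ w := fun hEq => hne (by simpa using congrArg Lp hEq)
    obtain ⟨i, h', hh', heq⟩ := hcond2 _ hsocp hnep
    obtain ⟨hh'1, hh'2⟩ := soc_prod.mp hh'
    rcases fin_add_cases i with ⟨j, rfl⟩ | ⟨j, rfl⟩
    · refine ⟨j, Lp h', hh'1, ?_⟩
      have hthis := congrArg Lp heq
      simpa using hthis
    · exfalso
      have hthis := congrArg Lp heq
      simp only [Lp_add, Lp_append, prodRays_natAdd, add_zero] at hthis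
      have hmem : Lp w - h ∈ H₁ := by
        rw [← hthis, add_sub_cancel_left]
        exact hh'1.1.1
      exact hne (hsoc.2 _ hw1.1 hmem)

lemma forward_main' (h₁ : IsSimplicial r₁ r₁ H₁ b₁) (h₂ : IsSimplicial r₂ r₂ H₂ b₂)
    (hCM₁ : CMG H₁ b₁) {w : Fin (r₁ + r₂) → ℤ}
    (hw : AGwitnessG (prodSg H₁ H₂) (prodRays b₁ b₂) w)
    (hns : ∃ a ∈ socG H₂ b₂, a ≠ Rp w) :
    (∃ w', AGwitnessG H₂ b₂ w') ∧ H₁ = AddSubmonoid.closure (Set.range b₁) := by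
  obtain ⟨hwsoc, hcond1, hcond2⟩ := hw
  obtain ⟨hw1, hw2⟩ := soc_prod.mp hwsoc
  obtain ⟨a₂, ha₂, hane⟩ := hns
  have hsocsub : socG H₁ b₁ ⊆ {Lp w} := by
    intro a₁ ha₁
    rw [Set.mem_singleton_iff]
    by_contra hne1
    have hsoc : Fin.append a₁ a₂ ∈ socG (prodSg H₁ H₂) (prodRays b₁ b₂) :=
      soc_prod.mpr (by simpa using ⟨ha₁, ha₂⟩)
    have hne : Fin.append a₁ a₂ ≠ w := fun hEq => hane (by simpa using congrArg Rp hEq)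
    obtain ⟨i, h', hh', heq⟩ := hcond2 _ hsoc hne
    obtain ⟨hh'1, hh'2⟩ := soc_prod.mp hh'
    rcases fin_add_cases i with ⟨j, rfl⟩ | ⟨j, rfl⟩
    · have hthis := congrArg Rp heq
      simp only [Rp_add, Rp_append, prodRays_castAdd, add_zero] at hthis
      have hmem : Rp w - a₂ ∈ H₂ := by
        rw [← hthis, add_sub_cancel_left]
        exact hh'2.1.1
      exact hane (ha₂.2 _ hw2.1 hmem)
    · have hthis := congrArg Lp heq
      simp only [Lp_add, Lp_append, prodRays_natAdd, add_zero] at hthis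
      have hmem : Lp w - a₁ ∈ H₁ := by
        rw [← hthis, add_sub_cancel_left]
        exact hh'1.1.1
      exact hne1 (ha₁.2 _ hw1.1 hmem)
  have hsoc1 : socG H₁ b₁ = {Lp w} :=
    Set.Subset.antisymm hsocsub (Set.singleton_subset_iff.mpr hw1)
  have hapsub : aperyG H₁ b₁ ⊆ {Lp w} := by
    intro a₁ ha₁
    rw [Set.mem_singleton_iff]
    by_contra hne1
    have hnotsoc : a₁ ∉ socG H₁ b₁ := by
      intro hcon
      rw [hsoc1, Set.mem_singleton_iff] at hcon
      exact hne1 hcon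
    have hAp : Fin.append a₁ a₂ ∈ aperyG (prodSg H₁ H₂) (prodRays b₁ b₂) :=
      apery_prod.mpr (by simpa using ⟨ha₁, ha₂.1⟩)
    have hmem : w - Fin.append a₁ a₂ ∈ prodSg H₁ H₂ := by
      by_contra hnm
      have hsp := (hcond1 _ hAp).mpr hnm
      have hs := (soc_prod.mp hsp.1).1
      rw [Lp_append] at hs
      exact hnotsoc hs
    rw [mem_prodSg] at hmem
    simp only [Rp_sub, Rp_append] at hmem
    exact hane (ha₂.2 _ hw2.1 hmem.2)
  have hw1z : Lp w = 0 :=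
    (Set.mem_singleton_iff.mp (hapsub (zero_mem_apery h₁))).symm
  rw [hw1z] at hapsub
  have hap1 : aperyG H₁ b₁ = {0} :=
    Set.Subset.antisymm hapsub (Set.singleton_subset_iff.mpr (zero_mem_apery h₁))
  have hfree : H₁ = AddSubmonoid.closure (Set.range b₁) := free_of_apery_zero h₁ hCM₁ hap1
  have h0soc : (0 : Fin r₁ → ℤ) ∈ socG H₁ b₁ := by
    rw [hsoc1, hw1z]; rfl
  refine ⟨⟨Rp w, hw2, ?_, ?_⟩, hfree⟩
  · intro a ha
    have hAp : Fin.append (0 : Fin r₁ → ℤ) a ∈ aperyG (prodSg H₁ H₂) (prodRays b₁ b₂) :=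
      apery_prod.mpr (by simpa using ⟨zero_mem_apery h₁, ha⟩)
    have hiff := hcond1 _ hAp
    constructor
    · rintro ⟨hsoc, hne⟩
      intro hmem
      have hm : w - Fin.append (0 : Fin r₁ → ℤ) a ∈ prodSg H₁ H₂ := by
        rw [mem_prodSg]
        constructor
        · simpa [hw1z] using H₁.zero_mem
        · simpa using hmem
      have hne' : Fin.append (0 : Fin r₁ → ℤ) a ≠ w := fun hEq =>
        hne (by simpa using congrArg Rp hEq)
      exact hiff.mp ⟨soc_prod.mpr (by simpa using ⟨h0soc, hsoc⟩), hne'⟩ hm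
    · intro hmem
      have hnm : w - Fin.append (0 : Fin r₁ → ℤ) a ∉ prodSg H₁ H₂ := by
        rw [mem_prodSg]
        rintro ⟨-, hR⟩
        simp only [Rp_sub, Rp_append] at hR
        exact hmem hR
      obtain ⟨hsocp, hnep⟩ := hiff.mpr hnm
      have hrs := (soc_prod.mp hsocp).2
      rw [Rp_append] at hrs
      refine ⟨hrs, fun hEq => hnep ?_⟩
      apply LR_ext <;> simp [hEq, hw1z]
  · intro h hsoc hne
    have hsocp : Fin.append (0 : Fin r₁ → ℤ) h ∈ socG (prodSg H₁ H₂) (prodRays b₁ b₂) :=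
      soc_prod.mpr (by simpa using ⟨h0soc, hsoc⟩)
    have hnep : Fin.append (0 : Fin r₁ → ℤ) h ≠ w := fun hEq =>
      hne (by simpa using congrArg Rp hEq)
    obtain ⟨i, h', hh', heq⟩ := hcond2 _ hsocp hnep
    obtain ⟨hh'1, hh'2⟩ := soc_prod.mp hh'
    rcases fin_add_cases i with ⟨j, rfl⟩ | ⟨j, rfl⟩
    · exfalso
      have hthis := congrArg Rp heq
      simp only [Rp_add, Rp_append, prodRays_castAdd, add_zero] at hthis
      have hmem : Rp w - h ∈ H₂ := by
        rw [← hthis, add_sub_cancel_left]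
        exact hh'2.1.1
      exact hne (hsoc.2 _ hw2.1 hmem)
    · refine ⟨j, Rp h', hh'2, ?_⟩
      have hthis := congrArg Rp heq
      simpa using hthis

lemma converse_case1 (h₁ : IsSimplicial r₁ r₁ H₁ b₁) (h₂ : IsSimplicial r₂ r₂ H₂ b₂)
    (hCM₁ : CMG H₁ b₁) (hCM₂ : CMG H₂ b₂) {w₁ : Fin r₁ → ℤ} {w₂ : Fin r₂ → ℤ}
    (hs1 : socG H₁ b₁ = {w₁}) (hs2 : socG H₂ b₂ = {w₂}) :
    AGwitnessG (prodSg H₁ H₂) (prodRays b₁ b₂) (Fin.append w₁ w₂) := by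
  have hw1 : w₁ ∈ socG H₁ b₁ := by rw [hs1]; rfl
  have hw2 : w₂ ∈ socG H₂ b₂ := by rw [hs2]; rfl
  refine ⟨soc_prod.mpr (by simpa using ⟨hw1, hw2⟩), ?_, ?_⟩
  · intro h hAp
    obtain ⟨hA1, hA2⟩ := apery_prod.mp hAp
    constructor
    · rintro ⟨hsoc, hne⟩
      exfalso
      obtain ⟨hl, hr⟩ := soc_prod.mp hsoc
      rw [hs1, Set.mem_singleton_iff] at hl
      rw [hs2, Set.mem_singleton_iff] at hr
      exact hne (LR_ext (by simpa using hl) (by simpa using hr))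
    · intro hnm
      exfalso
      apply hnm
      rw [mem_prodSg]
      constructor
      · simpa using soc_singleton_sub h₁ hCM₁ hs1 _ hA1
      · simpa using soc_singleton_sub h₂ hCM₂ hs2 _ hA2
  · intro h hsoc hne
    exfalso
    obtain ⟨hl, hr⟩ := soc_prod.mp hsoc
    rw [hs1, Set.mem_singleton_iff] at hl
    rw [hs2, Set.mem_singleton_iff] at hr
    exact hne (LR_ext (by simpa using hl) (by simpa using hr))

lemma converse_case2 (h₂ : IsSimplicial r₂ r₂ H₂ b₂) {w₁ : Fin r₁ → ℤ}
    (hw : AGwitnessG H₁ b₁ w₁) (hfree : H₂ = AddSubmonoid.closure (Set.range b₂)) :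
    AGwitnessG (prodSg H₁ H₂) (prodRays b₁ b₂) (Fin.append w₁ 0) := by
  have hap2 : aperyG H₂ b₂ = {0} := apery_of_free h₂ hfree
  have hsoc2 : socG H₂ b₂ = {0} := soc_of_apery_zero hap2
  have h0soc : (0 : Fin r₂ → ℤ) ∈ socG H₂ b₂ := by rw [hsoc2]; rfl
  obtain ⟨hw1, hc1, hc2⟩ := hw
  refine ⟨soc_prod.mpr (by simpa using ⟨hw1, h0soc⟩), ?_, ?_⟩
  · intro h hAp
    obtain ⟨hA1, hA2⟩ := apery_prod.mp hAp
    have hR0 : Rp h = 0 := by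
      rw [hap2, Set.mem_singleton_iff] at hA2
      exact hA2
    have hiff := hc1 _ hA1
    constructor
    · rintro ⟨hsoc, hne⟩
      obtain ⟨hl, -⟩ := soc_prod.mp hsoc
      have hlne : Lp h ≠ w₁ := fun hEq =>
        hne (LR_ext (by simpa using hEq) (by simp [hR0]))
      have hnm1 := hiff.mp ⟨hl, hlne⟩
      intro hmem
      rw [mem_prodSg] at hmem
      apply hnm1
      simpa using hmem.1
    · intro hnm
      have hnm1 : w₁ - Lp h ∉ H₁ := by
        intro hm
        apply hnm
        rw [mem_prodSg]
        refine ⟨by simpa using hm, ?_⟩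
        simpa [hR0] using H₂.zero_mem
      obtain ⟨hl, hlne⟩ := hiff.mpr hnm1
      refine ⟨soc_prod.mpr ⟨hl, by rw [hR0]; exact h0soc⟩,
        fun hEq => hlne (by simpa using congrArg Lp hEq)⟩
  · intro h hsoc hne
    obtain ⟨hl, hr⟩ := soc_prod.mp hsoc
    rw [hsoc2, Set.mem_singleton_iff] at hr
    have hlne : Lp h ≠ w₁ := fun hEq =>
      hne (LR_ext (by simpa using hEq) (by simpa using hr))
    obtain ⟨i, h', hh', heq⟩ := hc2 _ hl hlne
    refine ⟨Fin.castAdd r₂ i, Fin.append h' 0,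
      soc_prod.mpr (by simpa using ⟨hh', h0soc⟩), ?_⟩
    apply LR_ext
    · simpa using heq
    · simp [hr]

lemma converse_case3 (h₁ : IsSimplicial r₁ r₁ H₁ b₁) {w₂ : Fin r₂ → ℤ}
    (hw : AGwitnessG H₂ b₂ w₂) (hfree : H₁ = AddSubmonoid.closure (Set.range b₁)) :
    AGwitnessG (prodSg H₁ H₂) (prodRays b₁ b₂) (Fin.append 0 w₂) := by
  have hap1 : aperyG H₁ b₁ = {0} := apery_of_free h₁ hfree
  have hsoc1 : socG H₁ b₁ = {0} := soc_of_apery_zero hap1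
  have h0soc : (0 : Fin r₁ → ℤ) ∈ socG H₁ b₁ := by rw [hsoc1]; rfl
  obtain ⟨hw2, hc1, hc2⟩ := hw
  refine ⟨soc_prod.mpr (by simpa using ⟨h0soc, hw2⟩), ?_, ?_⟩
  · intro h hAp
    obtain ⟨hA1, hA2⟩ := apery_prod.mp hAp
    have hL0 : Lp h = 0 := by
      rw [hap1, Set.mem_singleton_iff] at hA1
      exact hA1
    have hiff := hc1 _ hA2
    constructor
    · rintro ⟨hsoc, hne⟩
      obtain ⟨-, hr⟩ := soc_prod.mp hsoc
      have hrne : Rp h ≠ w₂ := fun hEq =>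
        hne (LR_ext (by simp [hL0]) (by simpa using hEq))
      have hnm1 := hiff.mp ⟨hr, hrne⟩
      intro hmem
      rw [mem_prodSg] at hmem
      apply hnm1
      simpa using hmem.2
    · intro hnm
      have hnm1 : w₂ - Rp h ∉ H₂ := by
        intro hm
        apply hnm
        rw [mem_prodSg]
        refine ⟨?_, by simpa using hm⟩
        simpa [hL0] using H₁.zero_mem
      obtain ⟨hr, hrne⟩ := hiff.mpr hnm1
      refine ⟨soc_prod.mpr ⟨by rw [hL0]; exact h0soc, hr⟩,
        fun hEq => hrne (by simpa using congrArg Rp hEq)⟩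
  · intro h hsoc hne
    obtain ⟨hl, hr⟩ := soc_prod.mp hsoc
    rw [hsoc1, Set.mem_singleton_iff] at hl
    have hrne : Rp h ≠ w₂ := fun hEq =>
      hne (LR_ext (by simpa using hl) (by simpa using hEq))
    obtain ⟨i, h', hh', heq⟩ := hc2 _ hr hrne
    refine ⟨Fin.natAdd r₁ i, Fin.append (0 : Fin r₁ → ℤ) h',
      soc_prod.mpr (by simpa using ⟨h0soc, hh'⟩), ?_⟩
    apply LR_ext
    · simp [hl]
    · simpa using heq

end Main

/-- For Cohen–Macaulay simplicial semigroups `(H₁,E₁)`, `(H₂,E₂)`, the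
product has an AG witness iff either both types are `1`, or one factor has an AG witness
and the other is the free monoid on its extreme rays. -/
theorem product_AG_iff {r₁ r₂ : ℕ}
    (H₁ : AddSubmonoid (Fin r₁ → ℤ)) (b₁ : Fin r₁ → (Fin r₁ → ℤ))
    (H₂ : AddSubmonoid (Fin r₂ → ℤ)) (b₂ : Fin r₂ → (Fin r₂ → ℤ))
    (h₁ : IsSimplicial r₁ r₁ H₁ b₁) (h₂ : IsSimplicial r₂ r₂ H₂ b₂)
    (hCM₁ : CMG H₁ b₁) (hCM₂ : CMG H₂ b₂) :
    (∃ w, AGwitnessG (prodSg H₁ H₂) (prodRays b₁ b₂) w) ↔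
      ((socG H₁ b₁).ncard = 1 ∧ (socG H₂ b₂).ncard = 1) ∨
      ((∃ w, AGwitnessG H₁ b₁ w) ∧ H₂ = AddSubmonoid.closure (Set.range b₂)) ∨
      ((∃ w, AGwitnessG H₂ b₂ w) ∧ H₁ = AddSubmonoid.closure (Set.range b₁)) := by
  constructor
  · rintro ⟨w, hw⟩
    by_cases hc1 : ∃ a ∈ socG H₁ b₁, a ≠ Lp w
    · exact Or.inr (Or.inl (forward_main h₁ h₂ hCM₂ hw hc1))
    · by_cases hc2 : ∃ a ∈ socG H₂ b₂, a ≠ Rp w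
      · exact Or.inr (Or.inr (forward_main' h₁ h₂ hCM₁ hw hc2))
      · left
        push_neg at hc1 hc2
        obtain ⟨hw1, hw2⟩ := soc_prod.mp hw.1
        constructor
        · rw [show socG H₁ b₁ = {Lp w} from
            Set.eq_singleton_iff_unique_mem.mpr ⟨hw1, hc1⟩]
          exact Set.ncard_singleton _
        · rw [show socG H₂ b₂ = {Rp w} from
            Set.eq_singleton_iff_unique_mem.mpr ⟨hw2, hc2⟩]
          exact Set.ncard_singleton _
  · rintro (⟨hn1, hn2⟩ | ⟨⟨w₁, hw₁⟩, hfree⟩ | ⟨⟨w₂, hw₂⟩, hfree⟩)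
    · obtain ⟨w₁, hs1⟩ := Set.ncard_eq_one.mp hn1
      obtain ⟨w₂, hs2⟩ := Set.ncard_eq_one.mp hn2
      exact ⟨_, converse_case1 h₁ h₂ hCM₁ hCM₂ hs1 hs2⟩
    · exact ⟨_, converse_case2 h₂ hw₁ hfree⟩
    · exact ⟨_, converse_case3 h₁ hw₂ hfree⟩

end AGpaper
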